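/- Let c ∈ ℂ, r > 0, and let G ⊆ ℂ be an open set containing the closed disc {s : |s − c| ≤ r}. Let b ∈ ℂ, b ≠ 0, with b and −b in the open disc {s : |s − c| < r}, and let f₀ be holomorphic on G. Suppose functions fₙ, gₙ holomorphic on G and constants αₙ, βₙ satisfy the Bleistein scheme: αₙ = (fₙ(b) + fₙ(−b))/2, βₙ = (fₙ(b) − fₙ(−b))/(2b), fₙ(t) = αₙ + βₙ·t + (t² − b²)·gₙ(t) for all t ∈ G, and fₙ₊₁ = gₙ′, for n = 0, 1, 2, …. Define functions Aₙ(s) and Bₙ(s) recursively by A₀(s) = s/(s² − b²), B₀(s) = 1/(s² − b²), Aₙ₊₁(s) = (−1/(s² − b²))·Aₙ′(s), Bₙ₊₁(s) = (−1/(s² − b²))·Bₙ′(s). Then for every n ≥ 0, αₙ = (1/(2πi)) ∮_{|s−c|=r} Aₙ(s) f₀(s) ds and βₙ = (1/(2πi)) ∮_{|s−c|=r} Bₙ(s) f₀(s) ds, the contour traversed once counterclockwise. -/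

import Mathlib

open Complex Metric

noncomputable section

namespace BleisteinAux

open Polynomial Filter Topology

lemma two_pi_I_ne : (2 * (Real.pi : ℂ) * Complex.I) ≠ 0 := by
  simp [Real.pi_ne_zero, Complex.I_ne_zero]

lemma circleIntegral_add' {f g : ℂ → ℂ} {c : ℂ} {R : ℝ} (hf : CircleIntegrable f c R)
    (hg : CircleIntegrable g c R) :
    (∮ z in C(c, R), (f z + g z)) = (∮ z in C(c, R), f z) + ∮ z in C(c, R), g z := by
  simp only [circleIntegral, smul_add, intervalIntegral.integral_add hf.out hg.out]

lemma circleIntegral_deriv_eq_zero {c : ℂ} {r : ℝ} (hr : 0 ≤ r) {U : Set ℂ} (hU : IsOpen U)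
    (hsub : sphere c r ⊆ U) {w w' : ℂ → ℂ}
    (hw : ∀ z ∈ U, HasDerivAt w (w' z) z) (hw' : ContinuousOn w' U) :
    (∮ z in C(c, r), w' z) = 0 := by
  have hmem : ∀ θ : ℝ, circleMap c r θ ∈ U := fun θ => hsub (circleMap_mem_sphere c hr θ)
  have key : ∀ θ : ℝ, HasDerivAt (fun t => w (circleMap c r t))
      (w' (circleMap c r θ) * (circleMap 0 r θ * Complex.I)) θ := by
    intro θ
    have h1 : HasDerivAt (circleMap c r) (circleMap 0 r θ * Complex.I) θ :=
      hasDerivAt_circleMap c r θ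
    exact (hw _ (hmem θ)).comp θ h1
  have hcont : Continuous fun θ : ℝ => w' (circleMap c r θ) * (circleMap 0 r θ * Complex.I) := by
    apply Continuous.mul
    · exact hw'.comp_continuous (continuous_circleMap c r) hmem
    · exact (continuous_circleMap 0 r).mul continuous_const
  have : (∮ z in C(c, r), w' z)
      = ∫ θ in (0:ℝ)..2 * Real.pi, w' (circleMap c r θ) * (circleMap 0 r θ * Complex.I) := by
    simp only [circleIntegral, deriv_circleMap, smul_eq_mul]
    congr 1; funext θ; ring
  rw [this, intervalIntegral.integral_eq_sub_of_hasDerivAt (fun θ _ => key θ)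
    (hcont.intervalIntegrable _ _)]
  have hper : circleMap c r (2 * Real.pi) = circleMap c r 0 := by
    simpa using (periodic_circleMap c r) 0
  rw [hper, sub_self]

/-- integration by parts on the circle -/
lemma circleIntegral_ibp {c : ℂ} {r : ℝ} (hr : 0 ≤ r) {U : Set ℂ} (hU : IsOpen U)
    (hsub : sphere c r ⊆ U) {u v u' v' : ℂ → ℂ}
    (hu : ∀ z ∈ U, HasDerivAt u (u' z) z) (hv : ∀ z ∈ U, HasDerivAt v (v' z) z)
    (hu' : ContinuousOn u' U) (hv' : ContinuousOn v' U) :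
    (∮ z in C(c, r), (-(u' z)) * v z) = ∮ z in C(c, r), u z * v' z := by
  have hucont : ContinuousOn u U := fun z hz => ((hu z hz).continuousAt).continuousWithinAt
  have hvcont : ContinuousOn v U := fun z hz => ((hv z hz).continuousAt).continuousWithinAt
  have hzero : (∮ z in C(c, r), (u' z * v z + u z * v' z)) = 0 := by
    apply circleIntegral_deriv_eq_zero hr hU hsub (w := fun z => u z * v z)
      (fun z hz => (hu z hz).mul (hv z hz))
    exact (hu'.mul hvcont).add (hucont.mul hv')
  have hint1 : CircleIntegrable (fun z => u z * v' z) c r :=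
    ((hucont.mul hv').mono hsub).circleIntegrable hr
  have hint2 : CircleIntegrable (fun z => u' z * v z + u z * v' z) c r :=
    (((hu'.mul hvcont).add (hucont.mul hv')).mono hsub).circleIntegrable hr
  have congr1 : (∮ z in C(c, r), (-(u' z)) * v z)
      = ∮ z in C(c, r), (u z * v' z - (u' z * v z + u z * v' z)) := by
    apply circleIntegral.integral_congr hr
    intro z _; ring
  rw [congr1, circleIntegral.integral_sub hint1 hint2, hzero, sub_zero]


lemma poly_bound (p : Polynomial ℂ) :
    ∃ C : ℝ, 0 ≤ C ∧ ∀ z : ℂ, 1 ≤ ‖z‖ → ‖p.eval z‖ ≤ C * ‖z‖ ^ p.natDegree := by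
  classical
  refine ⟨∑ i ∈ Finset.range (p.natDegree + 1), ‖p.coeff i‖,
    Finset.sum_nonneg fun _ _ => norm_nonneg _, ?_⟩
  intro z hz
  rw [Polynomial.eval_eq_sum_range]
  calc ‖∑ i ∈ Finset.range (p.natDegree + 1), p.coeff i * z ^ i‖
      ≤ ∑ i ∈ Finset.range (p.natDegree + 1), ‖p.coeff i * z ^ i‖ := norm_sum_le _ _
    _ ≤ ∑ i ∈ Finset.range (p.natDegree + 1), ‖p.coeff i‖ * ‖z‖ ^ p.natDegree := by
        apply Finset.sum_le_sum
        intro i hi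
        rw [norm_mul, norm_pow]
        apply mul_le_mul_of_nonneg_left _ (norm_nonneg _)
        exact pow_le_pow_right₀ hz (Nat.lt_succ_iff.mp (Finset.mem_range.mp hi))
    _ = (∑ i ∈ Finset.range (p.natDegree + 1), ‖p.coeff i‖) * ‖z‖ ^ p.natDegree := by
        rw [Finset.sum_mul]

lemma sq_sub_sq_ne_zero {z b : ℂ} (h1 : z ≠ b) (h2 : z ≠ -b) : z ^ 2 - b ^ 2 ≠ 0 := by
  have h : z ^ 2 - b ^ 2 = (z + b) * (z - b) := by ring
  rw [h]
  exact mul_ne_zero (fun h => h2 (eq_neg_of_add_eq_zero_left h)) (sub_ne_zero.mpr h1)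

lemma ratzero {c b : ℂ} {r : ℝ} (hr : 0 < r) (hb : b ∈ ball c r) (hb' : -b ∈ ball c r)
    (p : Polynomial ℂ) (e : ℕ) (hdeg : p.natDegree + 2 ≤ 2 * e) :
    (∮ z in C(c, r), p.eval z / (z ^ 2 - b ^ 2) ^ e) = 0 := by
  set F : ℂ → ℂ := fun z => p.eval z / (z ^ 2 - b ^ 2) ^ e with hF
  have hne : ∀ z : ℂ, z ∉ ball c r → (z ^ 2 - b ^ 2) ≠ 0 := by
    intro z hz
    exact sq_sub_sq_ne_zero (fun h => hz (h ▸ hb)) (fun h => hz (h ▸ hb'))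
  have hdiff : ∀ z : ℂ, z ∉ ball c r → DifferentiableAt ℂ F z := by
    intro z hz
    exact (p.differentiable.differentiableAt).div
      ((((differentiable_pow 2).sub_const _).pow e).differentiableAt)
      (pow_ne_zero _ (hne z hz))
  have heq : ∀ R : ℝ, r ≤ R → (∮ z in C(c, R), F z) = ∮ z in C(c, r), F z := by
    intro R hR
    apply circleIntegral_eq_of_differentiable_on_annulus_off_countable (s := ∅) hr hR
      Set.countable_empty
    · intro z hz
      exact ((hdiff z hz.2).continuousAt).continuousWithinAt
    · intro z hz
      exact hdiff z (fun h => hz.1.2 (ball_subset_closedBall h))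
  obtain ⟨C, hC0, hC⟩ := poly_bound p
  set a : ℝ := max 1 (2 * ‖b‖ + 1) with ha
  have ha1 : (1:ℝ) ≤ a := le_max_left _ _
  set d : ℕ := p.natDegree with hd
  have hbound : ∀ R : ℝ, max r (‖c‖ + a) ≤ R →
      ‖∮ z in C(c, r), F z‖ ≤ 2 * Real.pi * R * (2 ^ e * C / (R - ‖c‖) ^ 2) := by
    intro R hR
    have hrR : r ≤ R := le_trans (le_max_left _ _) hR
    have haR : ‖c‖ + a ≤ R := le_trans (le_max_right _ _) hR
    have hRpos : 0 < R := lt_of_lt_of_le hr hrR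
    have hRc : a ≤ R - ‖c‖ := by linarith
    have hRc1 : (1:ℝ) ≤ R - ‖c‖ := le_trans ha1 hRc
    have hRcpos : (0:ℝ) < R - ‖c‖ := lt_of_lt_of_le one_pos hRc1
    rw [← heq R hrR]
    apply circleIntegral.norm_integral_le_of_norm_le_const hRpos.le
    intro z hz
    have hznorm : R - ‖c‖ ≤ ‖z‖ := by
      have h1 : dist z c = R := mem_sphere.mp hz
      have h2 : ‖z - c‖ ≤ ‖z‖ + ‖c‖ := norm_sub_le z c
      rw [← dist_eq_norm] at h2
      linarith
    have hz1 : (1:ℝ) ≤ ‖z‖ := le_trans hRc1 hznorm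
    have hzb : 2 * ‖b‖ + 1 ≤ ‖z‖ :=
      le_trans (le_trans (le_max_right _ _) hRc) hznorm
    have hzpos : (0:ℝ) < ‖z‖ := lt_of_lt_of_le one_pos hz1
    have hq : ‖z‖ ^ 2 / 2 ≤ ‖z ^ 2 - b ^ 2‖ := by
      have h1 : ‖(z:ℂ) ^ 2‖ - ‖(b:ℂ) ^ 2‖ ≤ ‖z ^ 2 - b ^ 2‖ := norm_sub_norm_le _ _
      rw [norm_pow, norm_pow] at h1
      have hb2 : ‖b‖ ^ 2 ≤ ‖z‖ ^ 2 / 2 := by nlinarith [norm_nonneg b, norm_nonneg z]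
      linarith
    have hqpos : (0:ℝ) < ‖z‖ ^ 2 / 2 := by positivity
    have hdenom : (‖z‖ ^ 2 / 2) ^ e ≤ ‖(z ^ 2 - b ^ 2) ^ e‖ := by
      rw [norm_pow]
      exact pow_le_pow_left₀ hqpos.le hq e
    have e2 : ‖z‖ ^ d * (R - ‖c‖) ^ 2 ≤ ‖z‖ ^ (2 * e) := by
      calc ‖z‖ ^ d * (R - ‖c‖) ^ 2 ≤ ‖z‖ ^ d * ‖z‖ ^ 2 := by
            apply mul_le_mul_of_nonneg_left _ (by positivity)
            exact pow_le_pow_left₀ hRcpos.le hznorm 2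
        _ = ‖z‖ ^ (d + 2) := by rw [pow_add]
        _ ≤ ‖z‖ ^ (2 * e) := pow_le_pow_right₀ hz1 hdeg
    have h1 : ‖F z‖ = ‖p.eval z‖ / ‖(z ^ 2 - b ^ 2) ^ e‖ := by
      rw [hF]; simp [norm_div]
    rw [h1]
    calc ‖p.eval z‖ / ‖(z ^ 2 - b ^ 2) ^ e‖
        ≤ (C * ‖z‖ ^ d) / ((‖z‖ ^ 2 / 2) ^ e) :=
          div_le_div₀ (by positivity) (hC z hz1) (pow_pos hqpos e) hdenom
      _ = (2 ^ e * C * ‖z‖ ^ d) / ‖z‖ ^ (2 * e) := by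
          rw [div_pow, ← pow_mul, div_div_eq_mul_div]
          ring
      _ ≤ 2 ^ e * C / (R - ‖c‖) ^ 2 := by
          rw [div_le_div_iff₀ (by positivity) (by positivity)]
          calc 2 ^ e * C * ‖z‖ ^ d * (R - ‖c‖) ^ 2
              = 2 ^ e * C * (‖z‖ ^ d * (R - ‖c‖) ^ 2) := by ring
            _ ≤ 2 ^ e * C * ‖z‖ ^ (2 * e) :=
                mul_le_mul_of_nonneg_left e2 (by positivity)
            _ = 2 ^ e * C * ‖z‖ ^ (2 * e) := rfl
  -- limit
  have hlim : Tendsto (fun R : ℝ => 2 * Real.pi * R * (2 ^ e * C / (R - ‖c‖) ^ 2))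
      atTop (𝓝 0) := by
    have hpoly : Tendsto (fun R : ℝ => R / (R - ‖c‖) ^ 2) atTop (𝓝 0) := by
      have := Polynomial.div_tendsto_zero_of_degree_lt (𝕜 := ℝ) (Polynomial.X)
        ((Polynomial.X - Polynomial.C ‖c‖) ^ 2) (by
          rw [Polynomial.degree_X, Polynomial.degree_pow, Polynomial.degree_X_sub_C]
          norm_num)
      apply this.congr
      intro R
      simp
    have := hpoly.const_mul (2 * Real.pi * (2 ^ e * C))
    rw [mul_zero] at this
    apply this.congr
    intro R
    ring
  have hV : ∀ᶠ R in atTop, ‖∮ z in C(c, r), F z‖ ≤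
      2 * Real.pi * R * (2 ^ e * C / (R - ‖c‖) ^ 2) :=
    eventually_atTop.2 ⟨max r (‖c‖ + a), hbound⟩
  exact norm_le_zero_iff.mp (ge_of_tendsto hlim hV)


def blePoly (b : ℂ) (p0 : Polynomial ℂ) : ℕ → Polynomial ℂ
  | 0 => p0
  | n + 1 => Polynomial.C (4 * (n : ℂ) + 2) * Polynomial.X * blePoly b p0 n
      - (Polynomial.X ^ 2 - Polynomial.C (b ^ 2)) * Polynomial.derivative (blePoly b p0 n)

lemma natDegree_blePoly (b : ℂ) (p0 : Polynomial ℂ) :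
    ∀ n, (blePoly b p0 n).natDegree ≤ p0.natDegree + 2 * n := by
  intro n
  induction n with
  | zero => simp [blePoly]
  | succ n ih =>
    rw [blePoly]
    apply le_trans (natDegree_sub_le _ _)
    apply max_le
    · apply le_trans (natDegree_mul_le)
      have h1 : (Polynomial.C (4 * (n : ℂ) + 2) * Polynomial.X).natDegree ≤ 1 := by
        apply le_trans (natDegree_mul_le)
        simp only [natDegree_C, natDegree_X]
        omega
      omega
    · apply le_trans (natDegree_mul_le)
      have h1 : (Polynomial.X ^ 2 - Polynomial.C (b ^ 2) : Polynomial ℂ).natDegree ≤ 2 := by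
        apply le_trans (natDegree_sub_le _ _)
        simp
      have h2 := natDegree_derivative_le (blePoly b p0 n)
      omega

lemma hasDerivAt_ratio (p : Polynomial ℂ) (k : ℕ) {b s : ℂ} (hs : s ^ 2 - b ^ 2 ≠ 0) :
    HasDerivAt (fun z : ℂ => p.eval z / (z ^ 2 - b ^ 2) ^ (k + 1))
      (((Polynomial.derivative p).eval s * (s ^ 2 - b ^ 2)
        - (2 * (k + 1) : ℂ) * s * p.eval s) / (s ^ 2 - b ^ 2) ^ (k + 2)) s := by
  have hq : HasDerivAt (fun z : ℂ => (z ^ 2 - b ^ 2) ^ (k + 1))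
      (((k : ℂ) + 1) * (s ^ 2 - b ^ 2) ^ k * (2 * s)) s := by
    have h1 : HasDerivAt (fun z : ℂ => z ^ 2 - b ^ 2) (2 * s) s := by
      simpa using (hasDerivAt_pow 2 s).sub_const (b ^ 2)
    have := h1.fun_pow (k + 1)
    simpa using this
  have hp : HasDerivAt (fun z : ℂ => p.eval z) ((Polynomial.derivative p).eval s) s :=
    p.hasDerivAt s
  have key := hp.fun_div hq (pow_ne_zero _ hs)
  refine key.congr_deriv (Eq.symm ?_)
  rw [div_eq_div_iff (pow_ne_zero _ hs) (pow_ne_zero _ (pow_ne_zero _ hs))]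
  ring


lemma repr (b : ℂ) (p0 : Polynomial ℂ) (Xk : ℕ → ℂ → ℂ)
    (h0 : ∀ s, Xk 0 s = p0.eval s / (s ^ 2 - b ^ 2))
    (hsucc : ∀ n s, Xk (n + 1) s = (-(s ^ 2 - b ^ 2)⁻¹) * deriv (Xk n) s) :
    ∀ n s, Xk n s = (blePoly b p0 n).eval s / (s ^ 2 - b ^ 2) ^ (2 * n + 1) := by
  intro n
  induction n with
  | zero => intro s; simpa [blePoly] using h0 s
  | succ n ih =>
    intro s
    have hfun : Xk n = fun z => (blePoly b p0 n).eval z / (z ^ 2 - b ^ 2) ^ (2 * n + 1) :=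
      funext ih
    by_cases hs : s ^ 2 - b ^ 2 = 0
    · rw [hsucc n s, hs]
      simp
    · rw [hsucc n s, hfun]
      have hd := hasDerivAt_ratio (blePoly b p0 n) (2 * n) (b := b) (s := s) hs
      rw [hd.deriv, blePoly]
      simp only [eval_sub, eval_mul, eval_pow, eval_C, eval_X]
      push_cast
      field_simp
      ring

lemma cauchy_pf (c : ℂ) (r : ℝ) (G : Set ℂ) (hGsub : closedBall c r ⊆ G)
    (w : ℂ) (hw : w ∈ ball c r) (f0 : ℂ → ℂ) (hf0 : DifferentiableOn ℂ f0 G) :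
    (∮ z in C(c, r), (z - w)⁻¹ * f0 z) = (2 * (Real.pi : ℂ) * Complex.I) * f0 w := by
  have h := DifferentiableOn.circleIntegral_sub_inv_smul (hf0.mono hGsub) hw
  simpa [smul_eq_mul] using h

lemma sphere_ne {c b : ℂ} {r : ℝ} (hbmem : b ∈ ball c r) {z : ℂ} (hz : z ∈ sphere c r) :
    z ≠ b := by
  intro h; rw [mem_sphere] at hz; rw [mem_ball] at hbmem; rw [h] at hz; linarith

lemma base_A (c : ℂ) (r : ℝ) (hr : 0 < r) (G : Set ℂ) (hGsub : closedBall c r ⊆ G)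
    (b : ℂ) (hbmem : b ∈ ball c r) (hbmem' : -b ∈ ball c r)
    (f0 : ℂ → ℂ) (hf0 : DifferentiableOn ℂ f0 G) :
    (∮ z in C(c, r), (z / (z ^ 2 - b ^ 2)) * f0 z)
      = (2 * (Real.pi : ℂ) * Complex.I) * ((f0 b + f0 (-b)) / 2) := by
  have hsphG : sphere c r ⊆ G := le_trans sphere_subset_closedBall hGsub
  have hf0c : ContinuousOn f0 (sphere c r) := hf0.continuousOn.mono hsphG
  have hcong : ∀ z ∈ sphere c r,
      (z / (z ^ 2 - b ^ 2)) * f0 z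
        = (2 : ℂ)⁻¹ * ((z - b)⁻¹ * f0 z) + (2 : ℂ)⁻¹ * ((z - -b)⁻¹ * f0 z) := by
    intro z hz
    have h1 : z ≠ b := sphere_ne hbmem hz
    have h2 : z ≠ -b := sphere_ne hbmem' hz
    have h3 : z - b ≠ 0 := sub_ne_zero.mpr h1
    have h4 : z - -b ≠ 0 := sub_ne_zero.mpr h2
    have h5 : z ^ 2 - b ^ 2 ≠ 0 := sq_sub_sq_ne_zero h1 h2
    have h4' : z + b ≠ 0 := by rwa [sub_neg_eq_add] at h4
    rw [sub_neg_eq_add]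
    field_simp
    ring
  have hib : ContinuousOn (fun z => (2:ℂ)⁻¹ * ((z - b)⁻¹ * f0 z)) (sphere c r) := by
    apply continuousOn_const.mul
    apply ContinuousOn.mul _ hf0c
    exact ((continuousOn_id.sub continuousOn_const).inv₀
      (fun z hz => sub_ne_zero.mpr (sphere_ne hbmem hz)))
  have hib' : ContinuousOn (fun z => (2:ℂ)⁻¹ * ((z - -b)⁻¹ * f0 z)) (sphere c r) := by
    apply continuousOn_const.mul
    apply ContinuousOn.mul _ hf0c
    exact ((continuousOn_id.sub continuousOn_const).inv₀
      (fun z hz => sub_ne_zero.mpr (sphere_ne hbmem' hz)))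
  rw [circleIntegral.integral_congr hr.le hcong,
    circleIntegral_add' (hib.circleIntegrable hr.le) (hib'.circleIntegrable hr.le)]
  have e1 : (∮ z in C(c, r), (2:ℂ)⁻¹ * ((z - b)⁻¹ * f0 z))
      = (2:ℂ)⁻¹ • ∮ z in C(c, r), (z - b)⁻¹ * f0 z := by
    rw [← circleIntegral.integral_smul]; simp [smul_eq_mul]
  have e2 : (∮ z in C(c, r), (2:ℂ)⁻¹ * ((z - -b)⁻¹ * f0 z))
      = (2:ℂ)⁻¹ • ∮ z in C(c, r), (z - -b)⁻¹ * f0 z := by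
    rw [← circleIntegral.integral_smul]; simp [smul_eq_mul]
  rw [e1, e2, cauchy_pf c r G hGsub b hbmem f0 hf0, cauchy_pf c r G hGsub (-b) hbmem' f0 hf0]
  simp only [smul_eq_mul]
  ring

lemma base_B (c : ℂ) (r : ℝ) (hr : 0 < r) (G : Set ℂ) (hGsub : closedBall c r ⊆ G)
    (b : ℂ) (hb : b ≠ 0) (hbmem : b ∈ ball c r) (hbmem' : -b ∈ ball c r)
    (f0 : ℂ → ℂ) (hf0 : DifferentiableOn ℂ f0 G) :
    (∮ z in C(c, r), (1 / (z ^ 2 - b ^ 2)) * f0 z)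
      = (2 * (Real.pi : ℂ) * Complex.I) * ((f0 b - f0 (-b)) / (2 * b)) := by
  have hsphG : sphere c r ⊆ G := le_trans sphere_subset_closedBall hGsub
  have hf0c : ContinuousOn f0 (sphere c r) := hf0.continuousOn.mono hsphG
  have hcong : ∀ z ∈ sphere c r,
      (1 / (z ^ 2 - b ^ 2)) * f0 z
        = (2 * b)⁻¹ * ((z - b)⁻¹ * f0 z) + (-(2 * b)⁻¹) * ((z - -b)⁻¹ * f0 z) := by
    intro z hz
    have h1 : z ≠ b := sphere_ne hbmem hz
    have h2 : z ≠ -b := sphere_ne hbmem' hz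
    have h3 : z - b ≠ 0 := sub_ne_zero.mpr h1
    have h4 : z - -b ≠ 0 := sub_ne_zero.mpr h2
    have h5 : z ^ 2 - b ^ 2 ≠ 0 := sq_sub_sq_ne_zero h1 h2
    have h4' : z + b ≠ 0 := by rwa [sub_neg_eq_add] at h4
    rw [sub_neg_eq_add]
    field_simp
    ring
  have hib : ContinuousOn (fun z => (2 * b)⁻¹ * ((z - b)⁻¹ * f0 z)) (sphere c r) := by
    apply continuousOn_const.mul
    apply ContinuousOn.mul _ hf0c
    exact ((continuousOn_id.sub continuousOn_const).inv₀
      (fun z hz => sub_ne_zero.mpr (sphere_ne hbmem hz)))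
  have hib' : ContinuousOn (fun z => (-(2 * b)⁻¹) * ((z - -b)⁻¹ * f0 z)) (sphere c r) := by
    apply continuousOn_const.mul
    apply ContinuousOn.mul _ hf0c
    exact ((continuousOn_id.sub continuousOn_const).inv₀
      (fun z hz => sub_ne_zero.mpr (sphere_ne hbmem' hz)))
  rw [circleIntegral.integral_congr hr.le hcong,
    circleIntegral_add' (hib.circleIntegrable hr.le) (hib'.circleIntegrable hr.le)]
  have e1 : (∮ z in C(c, r), (2 * b)⁻¹ * ((z - b)⁻¹ * f0 z))
      = (2 * b)⁻¹ • ∮ z in C(c, r), (z - b)⁻¹ * f0 z := by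
    rw [← circleIntegral.integral_smul]; simp [smul_eq_mul]
  have e2 : (∮ z in C(c, r), (-(2 * b)⁻¹) * ((z - -b)⁻¹ * f0 z))
      = (-(2 * b)⁻¹) • ∮ z in C(c, r), (z - -b)⁻¹ * f0 z := by
    rw [← circleIntegral.integral_smul]; simp [smul_eq_mul]
  rw [e1, e2, cauchy_pf c r G hGsub b hbmem f0 hf0, cauchy_pf c r G hGsub (-b) hbmem' f0 hf0]
  simp only [smul_eq_mul]
  field_simp
  ring


lemma kernel_step
    (c : ℂ) (r : ℝ) (hr : 0 < r) (G : Set ℂ) (hG : IsOpen G) (hGsub : closedBall c r ⊆ G)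
    (b : ℂ) (hbmem : b ∈ ball c r) (hbmem' : -b ∈ ball c r)
    (p0 : Polynomial ℂ) (hp0 : p0.natDegree ≤ 1)
    (Xk : ℕ → ℂ → ℂ)
    (hX0 : ∀ s, Xk 0 s = p0.eval s / (s ^ 2 - b ^ 2))
    (hXsucc : ∀ n s, Xk (n + 1) s = (-(s ^ 2 - b ^ 2)⁻¹) * deriv (Xk n) s)
    (f0 g0 f1 : ℂ → ℂ) (a0 b0 : ℂ)
    (hg0 : DifferentiableOn ℂ g0 G)
    (hdec : ∀ t ∈ G, f0 t = a0 + b0 * t + (t ^ 2 - b ^ 2) * g0 t)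
    (hstep1 : ∀ t ∈ G, f1 t = deriv g0 t) (n : ℕ) :
    (∮ z in C(c, r), Xk (n + 1) z * f0 z) = ∮ z in C(c, r), Xk n z * f1 z := by
  have hrepr := repr b p0 Xk hX0 hXsucc
  have hsphG : sphere c r ⊆ G := le_trans sphere_subset_closedBall hGsub
  have hQsph : ∀ z ∈ sphere c r, z ^ 2 - b ^ 2 ≠ 0 := by
    intro z hz
    have hzb : z ≠ b := by
      intro h; rw [mem_sphere] at hz; rw [mem_ball] at hbmem; rw [h] at hz; linarith
    have hzb' : z ≠ -b := by
      intro h; rw [mem_sphere] at hz; rw [mem_ball] at hbmem'; rw [h] at hz; linarith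
    exact sq_sub_sq_ne_zero hzb hzb'
  set U : Set ℂ := G ∩ {z | z ^ 2 - b ^ 2 ≠ 0} with hUdef
  have hUopen : IsOpen U :=
    hG.inter (((continuous_pow 2).sub continuous_const).isOpen_preimage {0}ᶜ
      isOpen_compl_singleton)
  have hUsph : sphere c r ⊆ U := fun z hz => ⟨hsphG hz, hQsph z hz⟩
  -- continuity of kernels on U
  have hcontX : ∀ m, ContinuousOn (Xk m) U := by
    intro m
    rw [funext (hrepr m)]
    apply ContinuousOn.div
    · exact ((blePoly b p0 m).continuous_aeval).continuousOn
    · exact (((continuous_pow 2).sub continuous_const).pow _).continuousOn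
    · exact fun z hz => pow_ne_zero _ hz.2
  -- differentiability of kernels on U
  have hXderiv : ∀ m, ∀ z ∈ U, HasDerivAt (Xk m) (deriv (Xk m) z) z := by
    intro m z hz
    have hdiff : DifferentiableAt ℂ (Xk m) z := by
      rw [funext (hrepr m)]
      exact (hasDerivAt_ratio (blePoly b p0 m) (2 * m) hz.2).differentiableAt
    exact hdiff.hasDerivAt
  -- deriv of kernel in terms of next kernel
  have hderiv_eq : ∀ m, ∀ z ∈ U, deriv (Xk m) z = -((z ^ 2 - b ^ 2) * Xk (m + 1) z) := by
    intro m z hz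
    have h2 : -((z ^ 2 - b ^ 2) * (-(z ^ 2 - b ^ 2)⁻¹ * deriv (Xk m) z))
        = ((z ^ 2 - b ^ 2) * (z ^ 2 - b ^ 2)⁻¹) * deriv (Xk m) z := by ring
    rw [hXsucc m z, h2, mul_inv_cancel₀ hz.2, one_mul]
  have hcontDX : ContinuousOn (deriv (Xk n)) U :=
    ContinuousOn.congr ((((continuous_pow 2).sub continuous_const).continuousOn).mul
        (hcontX (n + 1))).neg (fun z hz => hderiv_eq n z hz)
  -- derivative facts for g0
  have hg0' : ∀ z ∈ U, HasDerivAt g0 (deriv g0 z) z := fun z hz =>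
    (hg0.differentiableAt (hG.mem_nhds hz.1)).hasDerivAt
  have hcontg0' : ContinuousOn (deriv g0) U :=
    (((hg0.analyticOnNhd hG).deriv).continuousOn).mono Set.inter_subset_left
  have hcontg0 : ContinuousOn g0 U := hg0.continuousOn.mono Set.inter_subset_left
  -- integrand decomposition on the sphere
  have hcong : ∀ z ∈ sphere c r,
      Xk (n + 1) z * f0 z
        = (a0 * Xk (n + 1) z + b0 * (z * Xk (n + 1) z)) + (-(deriv (Xk n) z)) * g0 z := by
    intro z hz
    have hzG := hsphG hz
    have hzQ := hQsph z hz
    rw [hdec z hzG, hXsucc n z]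
    field_simp
    ring
  -- integrability
  have hc1 : ContinuousOn (fun z => a0 * Xk (n + 1) z) (sphere c r) :=
    (continuousOn_const.mul (hcontX (n + 1))).mono hUsph
  have hc2 : ContinuousOn (fun z => b0 * (z * Xk (n + 1) z)) (sphere c r) :=
    (continuousOn_const.mul (continuousOn_id.mul (hcontX (n + 1)))).mono hUsph
  have hc3 : ContinuousOn (fun z => (-(deriv (Xk n) z)) * g0 z) (sphere c r) :=
    ((hcontDX.neg.mul hcontg0)).mono hUsph
  have hi1 : CircleIntegrable (fun z => a0 * Xk (n + 1) z) c r := hc1.circleIntegrable hr.le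
  have hi2 : CircleIntegrable (fun z => b0 * (z * Xk (n + 1) z)) c r := hc2.circleIntegrable hr.le
  have hi12 : CircleIntegrable (fun z => a0 * Xk (n + 1) z + b0 * (z * Xk (n + 1) z)) c r :=
    (hc1.add hc2).circleIntegrable hr.le
  have hi3 : CircleIntegrable (fun z => (-(deriv (Xk n) z)) * g0 z) c r :=
    hc3.circleIntegrable hr.le
  -- the three integrals
  have hz1 : (∮ z in C(c, r), a0 * Xk (n + 1) z) = 0 := by
    have heq : (fun z : ℂ => Xk (n + 1) z)
        = fun z => (blePoly b p0 (n + 1)).eval z / (z ^ 2 - b ^ 2) ^ (2 * (n + 1) + 1) :=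
      funext (hrepr (n + 1))
    calc (∮ z in C(c, r), a0 * Xk (n + 1) z) = a0 • ∮ z in C(c, r), Xk (n + 1) z := by
          rw [← circleIntegral.integral_smul]; simp [smul_eq_mul]
      _ = 0 := by
          rw [show (∮ z in C(c, r), Xk (n + 1) z)
              = ∮ z in C(c, r), (blePoly b p0 (n + 1)).eval z
                  / (z ^ 2 - b ^ 2) ^ (2 * (n + 1) + 1) by rw [← heq]]
          rw [ratzero hr hbmem hbmem' _ _ (by
            have := natDegree_blePoly b p0 (n + 1); omega)]
          simp
  have hz2 : (∮ z in C(c, r), b0 * (z * Xk (n + 1) z)) = 0 := by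
    have heq : (fun z : ℂ => z * Xk (n + 1) z)
        = fun z => (Polynomial.X * blePoly b p0 (n + 1)).eval z
            / (z ^ 2 - b ^ 2) ^ (2 * (n + 1) + 1) := by
      funext z
      rw [hrepr (n + 1) z, eval_mul, eval_X, mul_div_assoc]
    calc (∮ z in C(c, r), b0 * (z * Xk (n + 1) z))
        = b0 • ∮ z in C(c, r), z * Xk (n + 1) z := by
          rw [← circleIntegral.integral_smul]; simp [smul_eq_mul]
      _ = 0 := by
          rw [show (∮ z in C(c, r), z * Xk (n + 1) z)
              = ∮ z in C(c, r), (Polynomial.X * blePoly b p0 (n + 1)).eval z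
                  / (z ^ 2 - b ^ 2) ^ (2 * (n + 1) + 1) by rw [← heq]]
          rw [ratzero hr hbmem hbmem' _ _ (by
            have h1 := natDegree_blePoly b p0 (n + 1)
            have h2 : (Polynomial.X * blePoly b p0 (n + 1)).natDegree
                ≤ 1 + (blePoly b p0 (n + 1)).natDegree := by
              apply le_trans (natDegree_mul_le)
              simp [natDegree_X]
            omega)]
          simp
  have hz3 : (∮ z in C(c, r), (-(deriv (Xk n) z)) * g0 z) = ∮ z in C(c, r), Xk n z * f1 z := by
    rw [circleIntegral_ibp hr.le hUopen hUsph (hXderiv n) hg0' hcontDX hcontg0']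
    apply circleIntegral.integral_congr hr.le
    intro z hz
    simp only [hstep1 z (hsphG hz)]
  calc (∮ z in C(c, r), Xk (n + 1) z * f0 z)
      = ∮ z in C(c, r), ((a0 * Xk (n + 1) z + b0 * (z * Xk (n + 1) z))
          + (-(deriv (Xk n) z)) * g0 z) := circleIntegral.integral_congr hr.le hcong
    _ = (∮ z in C(c, r), (a0 * Xk (n + 1) z + b0 * (z * Xk (n + 1) z)))
          + ∮ z in C(c, r), (-(deriv (Xk n) z)) * g0 z := circleIntegral_add' hi12 hi3
    _ = ((∮ z in C(c, r), a0 * Xk (n + 1) z) + ∮ z in C(c, r), b0 * (z * Xk (n + 1) z))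
          + ∮ z in C(c, r), (-(deriv (Xk n) z)) * g0 z := by rw [circleIntegral_add' hi1 hi2]
    _ = ∮ z in C(c, r), Xk n z * f1 z := by rw [hz1, hz2, hz3]; ring



lemma bleistein_aux
    (c : ℂ) (r : ℝ) (hr : 0 < r) (G : Set ℂ) (hG : IsOpen G)
    (hGsub : closedBall c r ⊆ G)
    (b : ℂ) (hb : b ≠ 0) (hbmem : b ∈ ball c r) (hbmem' : -b ∈ ball c r)
    (A B : ℕ → ℂ → ℂ)
    (hA0 : ∀ s : ℂ, A 0 s = s / (s ^ 2 - b ^ 2))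
    (hB0 : ∀ s : ℂ, B 0 s = 1 / (s ^ 2 - b ^ 2))
    (hAsucc : ∀ n, ∀ s : ℂ, A (n + 1) s = (-(s ^ 2 - b ^ 2)⁻¹) * deriv (A n) s)
    (hBsucc : ∀ n, ∀ s : ℂ, B (n + 1) s = (-(s ^ 2 - b ^ 2)⁻¹) * deriv (B n) s) :
    ∀ n : ℕ, ∀ (f g : ℕ → ℂ → ℂ) (α β : ℕ → ℂ),
      (∀ n, DifferentiableOn ℂ (f n) G) →
      (∀ n, DifferentiableOn ℂ (g n) G) →
      (∀ n, α n = (f n b + f n (-b)) / 2) →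
      (∀ n, β n = (f n b - f n (-b)) / (2 * b)) →
      (∀ n, ∀ t ∈ G, f n t = α n + β n * t + (t ^ 2 - b ^ 2) * g n t) →
      (∀ n, ∀ t ∈ G, f (n + 1) t = deriv (g n) t) →
      α n = (2 * (Real.pi : ℂ) * Complex.I)⁻¹ * (∮ s in C(c, r), A n s * f 0 s) ∧
      β n = (2 * (Real.pi : ℂ) * Complex.I)⁻¹ * (∮ s in C(c, r), B n s * f 0 s) := by
  intro n
  induction n with
  | zero =>
    intro f g α β hf hg hα hβ hdecomp hstep
    constructor
    · have hcong : (fun s => A 0 s * f 0 s) = fun s => (s / (s ^ 2 - b ^ 2)) * f 0 s :=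
        funext fun s => by rw [hA0 s]
      rw [hcong, base_A c r hr G hGsub b hbmem hbmem' (f 0) (hf 0), hα 0,
        ← mul_assoc, inv_mul_cancel₀ two_pi_I_ne, one_mul]
    · have hcong : (fun s => B 0 s * f 0 s) = fun s => (1 / (s ^ 2 - b ^ 2)) * f 0 s :=
        funext fun s => by rw [hB0 s]
      rw [hcong, base_B c r hr G hGsub b hb hbmem hbmem' (f 0) (hf 0), hβ 0,
        ← mul_assoc, inv_mul_cancel₀ two_pi_I_ne, one_mul]
  | succ n ih =>
    intro f g α β hf hg hα hβ hdecomp hstep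
    have IH := ih (fun k => f (k + 1)) (fun k => g (k + 1)) (fun k => α (k + 1))
      (fun k => β (k + 1)) (fun k => hf (k + 1)) (fun k => hg (k + 1))
      (fun k => hα (k + 1)) (fun k => hβ (k + 1)) (fun k => hdecomp (k + 1))
      (fun k => hstep (k + 1))
    constructor
    · have hks := kernel_step c r hr G hG hGsub b hbmem hbmem' Polynomial.X
        (by simp) A (fun s => by rw [hA0 s, eval_X]) hAsucc
        (f 0) (g 0) (f 1) (α 0) (β 0) (hg 0) (hdecomp 0) (hstep 0) n
      rw [hks]
      exact IH.1
    · have hks := kernel_step c r hr G hG hGsub b hbmem hbmem' (1 : Polynomial ℂ)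
        (by simp) B (fun s => by rw [hB0 s, eval_one]) hBsucc
        (f 0) (g 0) (f 1) (α 0) (β 0) (hg 0) (hdecomp 0) (hstep 0) n
      rw [hks]
      exact IH.2

end BleisteinAux

/-- Cauchy-type integral representations `αₙ = (1/(2πi)) ∮ Aₙ(s) f₀(s) ds` and
`βₙ = (1/(2πi)) ∮ Bₙ(s) f₀(s) ds` for the coefficients of the Bleistein scheme, where
`A₀(s) = s/(s²−b²)`, `B₀(s) = 1/(s²−b²)` and `Xₙ₊₁(s) = (−1/(s²−b²))·Xₙ′(s)`. -/
theorem bleistein_coeff_cauchy_repr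
    (c : ℂ) (r : ℝ) (hr : 0 < r) (G : Set ℂ) (hG : IsOpen G)
    (hGsub : closedBall c r ⊆ G)
    (b : ℂ) (hb : b ≠ 0) (hbmem : b ∈ ball c r) (hbmem' : -b ∈ ball c r)
    (f g : ℕ → ℂ → ℂ) (α β : ℕ → ℂ)
    (hf : ∀ n, DifferentiableOn ℂ (f n) G)
    (hg : ∀ n, DifferentiableOn ℂ (g n) G)
    (hα : ∀ n, α n = (f n b + f n (-b)) / 2)
    (hβ : ∀ n, β n = (f n b - f n (-b)) / (2 * b))
    (hdecomp : ∀ n, ∀ t ∈ G, f n t = α n + β n * t + (t ^ 2 - b ^ 2) * g n t)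
    (hstep : ∀ n, ∀ t ∈ G, f (n + 1) t = deriv (g n) t)
    (A B : ℕ → ℂ → ℂ)
    (hA0 : ∀ s : ℂ, A 0 s = s / (s ^ 2 - b ^ 2))
    (hB0 : ∀ s : ℂ, B 0 s = 1 / (s ^ 2 - b ^ 2))
    (hAsucc : ∀ n, ∀ s : ℂ, A (n + 1) s = (-(s ^ 2 - b ^ 2)⁻¹) * deriv (A n) s)
    (hBsucc : ∀ n, ∀ s : ℂ, B (n + 1) s = (-(s ^ 2 - b ^ 2)⁻¹) * deriv (B n) s) :
    ∀ n : ℕ,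
      α n = (2 * (Real.pi : ℂ) * Complex.I)⁻¹ * (∮ s in C(c, r), A n s * f 0 s) ∧
      β n = (2 * (Real.pi : ℂ) * Complex.I)⁻¹ * (∮ s in C(c, r), B n s * f 0 s) := by
  intro n
  exact BleisteinAux.bleistein_aux c r hr G hG hGsub b hb hbmem hbmem' A B hA0 hB0
    hAsucc hBsucc n f g α β hf hg hα hβ hdecomp hstep
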